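/- Let u, v, w, x, y, z be positive real numbers such that v² ≤ u·w and y² ≤ x·z, and let λ ∈ (0,1). If (λ·v + (1−λ)·y)² = (λ·u + (1−λ)·x)·(λ·w + (1−λ)·z), then v² = u·w, y² = x·z, and w/u = z/x. -/
import Mathlib


/-- Equality analysis in the Cauchy–Schwarz step: if `u,v,w,x,y,z > 0`, `v² ≤ u·w`,
`y² ≤ x·z`, `λ ∈ (0,1)` and `(λ·v + (1−λ)·y)² = (λ·u + (1−λ)·x)·(λ·w + (1−λ)·z)`,
then `v² = u·w`, `y² = x·z` and `w/u = z/x`. -/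
theorem stmt7 (u v w x y z : ℝ) (hu : 0 < u) (hv : 0 < v) (hw : 0 < w)
    (hx : 0 < x) (hy : 0 < y) (hz : 0 < z)
    (h1 : v ^ 2 ≤ u * w) (h2 : y ^ 2 ≤ x * z)
    (l : ℝ) (hl : l ∈ Set.Ioo (0 : ℝ) 1)
    (heq : (l * v + (1 - l) * y) ^ 2 = (l * u + (1 - l) * x) * (l * w + (1 - l) * z)) :
    v ^ 2 = u * w ∧ y ^ 2 = x * z ∧ w / u = z / x := by
  obtain ⟨hl0, hl1⟩ := hl
  have hm : 0 < 1 - l := by linarith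
  -- 2vy ≤ uz + xw
  have hC : 2 * (v * y) ≤ u * z + x * w := by
    nlinarith [sq_nonneg (u * z - x * w), mul_pos hv hy, mul_pos hu hz, mul_pos hx hw,
      mul_le_mul h1 h2 (sq_nonneg y) (le_of_lt (mul_pos hu hw)),
      sq_nonneg (u * z + x * w - 2 * (v * y))]
  -- decompose the gap
  have hgap : l ^ 2 * (u * w - v ^ 2) + (1 - l) ^ 2 * (x * z - y ^ 2)
      + l * (1 - l) * (u * z + x * w - 2 * (v * y)) = 0 := by nlinarith [heq]
  have t1 : l ^ 2 * (u * w - v ^ 2) = 0 := by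
    nlinarith [mul_nonneg (sq_nonneg (1 - l)) (by linarith : (0:ℝ) ≤ x * z - y ^ 2),
      mul_nonneg (mul_nonneg hl0.le hm.le) (by linarith : (0:ℝ) ≤ u * z + x * w - 2 * (v * y)),
      mul_nonneg (sq_nonneg l) (by linarith : (0:ℝ) ≤ u * w - v ^ 2)]
  have t2 : (1 - l) ^ 2 * (x * z - y ^ 2) = 0 := by
    nlinarith [mul_nonneg (sq_nonneg (1 - l)) (by linarith : (0:ℝ) ≤ x * z - y ^ 2),
      mul_nonneg (mul_nonneg hl0.le hm.le) (by linarith : (0:ℝ) ≤ u * z + x * w - 2 * (v * y)),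
      mul_nonneg (sq_nonneg l) (by linarith : (0:ℝ) ≤ u * w - v ^ 2)]
  have t3 : u * z + x * w - 2 * (v * y) = 0 := by
    have hC0 : l * (1 - l) * (u * z + x * w - 2 * (v * y)) = 0 := by linarith
    have hpos : (0:ℝ) < l * (1 - l) := mul_pos hl0 hm
    exact (mul_eq_zero.mp hC0).resolve_left hpos.ne'
  have e1 : v ^ 2 = u * w := by
    have hl2 : (l:ℝ) ^ 2 ≠ 0 := by positivity
    have := (mul_eq_zero.mp t1).resolve_left hl2
    linarith
  have e2 : y ^ 2 = x * z := by
    have hm2 : ((1 - l):ℝ) ^ 2 ≠ 0 := by positivity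
    have := (mul_eq_zero.mp t2).resolve_left hm2
    linarith
  refine ⟨e1, e2, ?_⟩
  have hprod : v ^ 2 * y ^ 2 = (u * w) * (x * z) := by rw [e1, e2]
  have hzero : (u * z - x * w) ^ 2 = 0 := by
    have h : u * z + x * w = 2 * (v * y) := by linarith
    calc (u * z - x * w) ^ 2 = (u * z + x * w) ^ 2 - 4 * ((u * w) * (x * z)) := by ring
      _ = (2 * (v * y)) ^ 2 - 4 * ((u * w) * (x * z)) := by rw [h]
      _ = 4 * (v ^ 2 * y ^ 2) - 4 * ((u * w) * (x * z)) := by ring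
      _ = 0 := by rw [hprod]; ring
  have huz : u * z = x * w := by
    have := sq_eq_zero_iff.mp hzero
    linarith
  field_simp
  linarith [huz]
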